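/- With notation as in the bijection $X \to Y$ between single-value multiset fillings of shape $\mu$ and row-weakly-increasing skew fillings of shape $\lambda/\mu$: if $x \mapsto y$, then $x$ satisfies the maximality condition $\sum_{1 \leq j \leq k} (|b_{(i+1)j}| - |b_{i(j-1)}|) \leq 1$ for all $i \geq 1, k \geq 0$ if and only if the columns of $y$ are strictly increasing down columns (i.e., $y$ is semistandard). -/

import Mathlib

open Finset MvPolynomial

/-- Height of the column with label `j` (columns are labeled `ℓ, ℓ-1, …, 1` from
left to right, so the column labeled `j` is the one in 0-indexed position `ℓ - j`):
the number of rows `i` with `μ i > ℓ - j`. -/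
def colHt (n : ℕ) (μ : Fin n → ℕ) (ℓ j : ℕ) : ℕ :=
  (Finset.univ.filter fun i : Fin n => ℓ - j < μ i).card

/-- A multiset tableau of shape `μ` (a partition with `n` parts, all parts `≤ ℓ`).
`box i j` is the content of the box in row `i` (0-indexed) and the column
labeled `j` (labels `ℓ, …, 1` from left to right); boxes outside the diagram are
empty.  Entries are positive integers; the maximum of each box is strictly less
than the minimum of the box below it and weakly less than the minimum of the box
to its right (the box to the right of column label `j+1` is column label `j`). -/
structure MTab (n ℓ : ℕ) (μ : Fin n → ℕ) where
  box : Fin n → ℕ → Multiset ℕ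
  pos : ∀ i j, ∀ a ∈ box i j, 1 ≤ a
  supp : ∀ i j, box i j ≠ 0 ↔ (1 ≤ j ∧ j ≤ ℓ ∧ ℓ - j < μ i)
  right : ∀ (i : Fin n) (j : ℕ), ∀ a ∈ box i (j + 1), ∀ z ∈ box i j, a ≤ z
  below : ∀ (i i' : Fin n) (j : ℕ), (i : ℕ) + 1 = (i' : ℕ) →
    ∀ a ∈ box i j, ∀ z ∈ box i' j, a < z

/-- The weight of a multiset tableau: the number of entries equal to `v`. -/
def MTab.wt {n ℓ : ℕ} {μ : Fin n → ℕ} (P : MTab n ℓ μ) (v : ℕ) : ℕ :=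
  ∑ i : Fin n, ∑ j ∈ Finset.Icc 1 ℓ, (P.box i j).count v

/-- The column weight of a multiset tableau at column label `j`: the number of
entries in column `j` minus the height of column `j`. -/
def MTab.cw {n ℓ : ℕ} {μ : Fin n → ℕ} (P : MTab n ℓ μ) (j : ℕ) : ℕ :=
  (∑ i : Fin n, (P.box i j).card) - colHt n μ ℓ j

/-- The maximality conditions for a multiset tableau: box `b_{ij}` (row `i`,
0-indexed, column label `j`) contains only entries equal to `i + 1` (the paper's
1-indexed row number), and for all adjacent rows `i, i+1` and all `k ≥ 0`,
`∑_{1 ≤ j ≤ k} (|b_{(i+1)j}| - |b_{i(j-1)}|) ≤ 1`. -/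
def MTab.IsMax {n ℓ : ℕ} {μ : Fin n → ℕ} (P : MTab n ℓ μ) : Prop :=
  (∀ (i : Fin n) (j : ℕ), ∀ a ∈ P.box i j, a = (i : ℕ) + 1) ∧
  (∀ (i i' : Fin n), (i : ℕ) + 1 = (i' : ℕ) → ∀ k : ℕ,
    (∑ j ∈ Finset.Icc 1 k, (((P.box i' j).card : ℤ) - ((P.box i (j - 1)).card : ℤ))) ≤ 1)


/-- A row-weakly-increasing filling of the skew shape `λ/μ` (0-indexed columns,
value `0` marking empty cells) with values in `{1, …, ℓ}` such that every entry
`v` occurs on or above row `c_v = colHt n μ ℓ v` (no column condition imposed). -/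
structure YTab (n ℓ : ℕ) (μ lam : Fin n → ℕ) where
  entry : Fin n → ℕ → ℕ
  supp : ∀ i j, entry i j ≠ 0 ↔ (μ i ≤ j ∧ j < lam i)
  le_alpha : ∀ i j, entry i j ≤ ℓ
  row : ∀ (i : Fin n) (j j' : ℕ), j ≤ j' → entry i j ≠ 0 → entry i j' ≠ 0 →
    entry i j ≤ entry i j'
  restrict : ∀ i j, entry i j ≠ 0 → (i : ℕ) < colHt n μ ℓ (entry i j)

/-- The weight of such a filling: the number of entries equal to `v ≥ 1`. -/
def YTab.wt {n ℓ : ℕ} {μ lam : Fin n → ℕ} (y : YTab n ℓ μ lam) (v : ℕ) : ℕ :=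
  ∑ i : Fin n, ((Finset.range (lam i)).filter fun j => y.entry i j = v).card


lemma auxIco (a : ℕ) (S : Finset ℕ)
    (hdc : ∀ p ∈ S, ∀ q, a ≤ q → q ≤ p → q ∈ S)
    (hlb : ∀ p ∈ S, a ≤ p) : S = Finset.Ico a (a + S.card) := by
  have key : ∀ q, a ≤ q → q ∉ S → S ⊆ Finset.Ico a q := by
    intro q hq hqS p hp
    simp only [Finset.mem_Ico]
    refine ⟨hlb p hp, ?_⟩
    by_contra h
    exact hqS (hdc p hp q hq (by omega))
  refine (Finset.eq_of_subset_of_card_le ?_ ?_).symm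
  · intro q hq
    simp only [Finset.mem_Ico] at hq
    by_contra hqS
    have := Finset.card_le_card (key q hq.1 hqS)
    rw [Nat.card_Ico] at this
    omega
  · rw [Nat.card_Ico]
    omega

lemma auxFin {n : ℕ} (f : Fin n → ℕ) (hf : ∀ s t : Fin n, s ≤ t → f t ≤ f s)
    (c : ℕ) (i : Fin n) :
    ((i : ℕ) < (Finset.univ.filter fun t : Fin n => c < f t).card) ↔ c < f i := by
  constructor
  · intro h
    by_contra hc
    push_neg at hc
    have hsub : (Finset.univ.filter fun t : Fin n => c < f t) ⊆ Finset.Iio i := by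
      intro t ht
      simp only [Finset.mem_filter, Finset.mem_univ, true_and] at ht
      simp only [Finset.mem_Iio]
      by_contra h2
      push_neg at h2
      exact absurd (lt_of_lt_of_le ht (hf i t h2)) (not_lt.mpr hc)
    have hcard := Finset.card_le_card hsub
    rw [Fin.card_Iio] at hcard
    omega
  · intro h
    have hsub : Finset.Iic i ⊆ (Finset.univ.filter fun t : Fin n => c < f t) := by
      intro t ht
      simp only [Finset.mem_Iic] at ht
      simp only [Finset.mem_filter, Finset.mem_univ, true_and]
      exact lt_of_lt_of_le h (hf t i ht)
    have hcard := Finset.card_le_card hsub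
    rw [Fin.card_Iic] at hcard
    omega

section YAux

variable {n ℓ : ℕ} {μ lam : Fin n → ℕ}

/-- Number of entries of row `i` of `y` that lie in `[1, k]`. -/
def NY (y : YTab n ℓ μ lam) (i : Fin n) (k : ℕ) : ℕ :=
  ∑ v ∈ Finset.Icc 1 k, ((Finset.range (lam i)).filter fun p => y.entry i p = v).card

lemma rowIco (y : YTab n ℓ μ lam) (i : Fin n) (k : ℕ) :
    ((Finset.range (lam i)).filter fun p => 1 ≤ y.entry i p ∧ y.entry i p ≤ k)
      = Finset.Ico (μ i) (μ i + NY y i k) := by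
  set S := ((Finset.range (lam i)).filter fun p => 1 ≤ y.entry i p ∧ y.entry i p ≤ k)
    with hSdef
  have hmem : ∀ p, p ∈ S ↔ (p < lam i ∧ 1 ≤ y.entry i p ∧ y.entry i p ≤ k) := by
    intro p
    simp [hSdef, Finset.mem_filter, Finset.mem_range]
  have hcard : S.card = NY y i k := by
    rw [Finset.card_eq_sum_card_fiberwise
      (f := fun p => y.entry i p) (t := Finset.Icc 1 k)
      (fun p hp => by rw [Finset.mem_coe, hmem] at hp; simp only [Finset.mem_coe, Finset.mem_Icc]; omega)]
    unfold NY
    apply Finset.sum_congr rfl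
    intro v hv
    simp only [Finset.mem_Icc] at hv
    congr 1
    ext p
    simp only [hSdef, Finset.mem_filter, Finset.mem_range]
    constructor
    · rintro ⟨⟨h1, _, _⟩, h4⟩
      exact ⟨h1, h4⟩
    · rintro ⟨h1, h4⟩
      exact ⟨⟨h1, by omega, by omega⟩, h4⟩
  rw [← hcard]
  apply auxIco
  · intro p hp q hq hqp
    rw [hmem] at hp
    rw [hmem]
    have hq2 : q < lam i := by omega
    have hqne : y.entry i q ≠ 0 := (y.supp i q).mpr ⟨hq, hq2⟩
    have hrow := y.row i q p hqp hqne (by omega)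
    exact ⟨hq2, by omega, by omega⟩
  · intro p hp
    rw [hmem] at hp
    exact ((y.supp i p).mp (by omega)).1

lemma rowN (y : YTab n ℓ μ lam) (i : Fin n) (k p : ℕ)
    (h1 : μ i ≤ p) (h2 : p < lam i) :
    y.entry i p ≤ k ↔ p < μ i + NY y i k := by
  have hne : y.entry i p ≠ 0 := (y.supp i p).mpr ⟨h1, h2⟩
  have hIco := rowIco y i k
  constructor
  · intro hk
    have hp : p ∈ Finset.Ico (μ i) (μ i + NY y i k) := by
      rw [← hIco]
      simp only [Finset.mem_filter, Finset.mem_range]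
      exact ⟨h2, by omega, hk⟩
    exact (Finset.mem_Ico.mp hp).2
  · intro hk
    have hp : p ∈ Finset.Ico (μ i) (μ i + NY y i k) := Finset.mem_Ico.mpr ⟨h1, hk⟩
    rw [← hIco] at hp
    simp only [Finset.mem_filter, Finset.mem_range] at hp
    exact hp.2.2

lemma NYbound (y : YTab n ℓ μ lam) (i : Fin n) (k : ℕ) (h : 0 < NY y i k) :
    μ i + NY y i k ≤ lam i := by
  have hIco := rowIco y i k
  have hp : μ i + NY y i k - 1 ∈ Finset.Ico (μ i) (μ i + NY y i k) := by
    simp only [Finset.mem_Ico]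
    omega
  rw [← hIco] at hp
  simp only [Finset.mem_filter, Finset.mem_range] at hp
  omega

lemma cntY_zero (y : YTab n ℓ μ lam) (hμ : ∀ i j : Fin n, i ≤ j → μ j ≤ μ i)
    (i : Fin n) (j : ℕ) (h1 : 1 ≤ j) (h2 : ¬(j ≤ ℓ ∧ ℓ - j < μ i)) :
    ((Finset.range (lam i)).filter fun p => y.entry i p = j).card = 0 := by
  rw [Finset.card_eq_zero, Finset.filter_eq_empty_iff]
  intro p hp he
  have hne : y.entry i p ≠ 0 := by omega
  have hres := y.restrict i p hne
  rw [he] at hres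
  have hle := y.le_alpha i p
  rw [he] at hle
  simp only [colHt] at hres
  rw [auxFin μ hμ (ℓ - j) i] at hres
  exact h2 ⟨hle, hres⟩

end YAux

lemma shiftSum (f : ℕ → ℤ) (h0 : f 0 = 0) (k : ℕ) (hk : 1 ≤ k) :
    ∑ j ∈ Finset.Icc 1 k, f (j - 1) = ∑ j ∈ Finset.Icc 1 (k - 1), f j := by
  have hmap : Finset.Icc 1 k
      = Finset.map ⟨fun j => j + 1, add_left_injective 1⟩ (Finset.Icc 0 (k - 1)) := by
    ext j
    simp only [Finset.mem_map, Finset.mem_Icc, Function.Embedding.coeFn_mk]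
    constructor
    · intro hj
      exact ⟨j - 1, by omega, by omega⟩
    · rintro ⟨t, ht, rfl⟩
      omega
  rw [hmap, Finset.sum_map]
  simp only [Function.Embedding.coeFn_mk, Nat.add_sub_cancel]
  have hins : Finset.Icc 0 (k - 1) = insert 0 (Finset.Icc 1 (k - 1)) := by
    ext j
    simp only [Finset.mem_insert, Finset.mem_Icc]
    omega
  rw [hins, Finset.sum_insert (by simp), h0, zero_add]

/-- if `x` (a filling of shape `μ` in which box `b_{ij}` contains
only copies of the row value `i+1`) corresponds to `y` (a row-weakly-increasing
filling of shape `λ/μ`) under the row-content relation (row `i` of `y` contains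
exactly `|b_{ij}(x)| - 1` copies of `j`), then `x` satisfies the maximality
condition `∑_{1 ≤ j ≤ k} (|b_{(i+1)j}| - |b_{i(j-1)}|) ≤ 1` if and only if the
columns of `y` are strictly increasing down columns (i.e. `y` is semistandard). -/
theorem stmt9 (n ℓ : ℕ) (hn : 0 < n) (μ lam : Fin n → ℕ)
    (hμ : ∀ i j : Fin n, i ≤ j → μ j ≤ μ i) (hl : ℓ = μ ⟨0, hn⟩)
    (hlam : ∀ i j : Fin n, i ≤ j → lam j ≤ lam i) (hsub : ∀ i, μ i ≤ lam i)
    (x : MTab n ℓ μ) (hx : ∀ (i : Fin n) (j : ℕ), ∀ a ∈ x.box i j, a = (i : ℕ) + 1)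
    (y : YTab n ℓ μ lam)
    (hrel : ∀ (i : Fin n) (j : ℕ), 1 ≤ j →
      ((Finset.range (lam i)).filter fun jj => y.entry i jj = j).card
        = (x.box i j).card - 1) :
    (∀ (i i' : Fin n), (i : ℕ) + 1 = (i' : ℕ) → ∀ k : ℕ,
      (∑ j ∈ Finset.Icc 1 k,
        (((x.box i' j).card : ℤ) - ((x.box i (j - 1)).card : ℤ))) ≤ 1)
    ↔
    (∀ (i i' : Fin n) (j : ℕ), i < i' → y.entry i j ≠ 0 → y.entry i' j ≠ 0 →
      y.entry i j < y.entry i' j) := by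
  have hml : ∀ i : Fin n, μ i ≤ ℓ := by
    intro i
    rw [hl]
    exact hμ ⟨0, hn⟩ i (by simp [Fin.le_def])
  have hbox0 : ∀ i : Fin n, x.box i 0 = 0 := by
    intro i
    by_contra h
    have := (x.supp i 0).mp h
    omega
  have hB : ∀ (i : Fin n) (j : ℕ), 1 ≤ j → ((x.box i j).card : ℤ)
      = (((Finset.range (lam i)).filter fun p => y.entry i p = j).card : ℤ)
        + (if j ≤ ℓ ∧ ℓ - j < μ i then 1 else 0) := by
    intro i j h1
    by_cases hc : j ≤ ℓ ∧ ℓ - j < μ i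
    · have hbox : x.box i j ≠ 0 := (x.supp i j).mpr ⟨h1, hc.1, hc.2⟩
      have hpos : 0 < Multiset.card (x.box i j) := Multiset.card_pos.mpr hbox
      have hr := hrel i j h1
      rw [if_pos hc]
      omega
    · have hbox : x.box i j = 0 := by
        by_contra h
        obtain ⟨_, h2, h3⟩ := (x.supp i j).mp h
        exact hc ⟨h2, h3⟩
      rw [if_neg hc, hbox, cntY_zero y hμ i j h1 hc]
      simp
  have hSB : ∀ (i : Fin n) (k : ℕ), ∑ j ∈ Finset.Icc 1 k, ((x.box i j).card : ℤ)
      = (NY y i k : ℤ) + ((min k ℓ - (ℓ - μ i) : ℕ) : ℤ) := by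
    intro i k
    have h1 : ∑ j ∈ Finset.Icc 1 k, ((x.box i j).card : ℤ)
        = ∑ j ∈ Finset.Icc 1 k,
            ((((Finset.range (lam i)).filter fun p => y.entry i p = j).card : ℤ)
              + (if j ≤ ℓ ∧ ℓ - j < μ i then 1 else 0)) :=
      Finset.sum_congr rfl (fun j hj => hB i j (Finset.mem_Icc.mp hj).1)
    rw [h1, Finset.sum_add_distrib]
    congr 1
    · unfold NY
      rw [Nat.cast_sum]
    · rw [Finset.sum_boole]
      have heq : (Finset.Icc 1 k).filter (fun j => j ≤ ℓ ∧ ℓ - j < μ i)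
          = Finset.Ioc (ℓ - μ i) (min k ℓ) := by
        ext j
        simp only [Finset.mem_filter, Finset.mem_Icc, Finset.mem_Ioc]
        omega
      rw [heq, Nat.card_Ioc]
  have hMre : ∀ (i i' : Fin n) (k : ℕ), 1 ≤ k →
      ((∑ j ∈ Finset.Icc 1 k,
          (((x.box i' j).card : ℤ) - ((x.box i (j - 1)).card : ℤ))) ≤ 1
        ↔ (NY y i' k : ℤ) + ((min k ℓ - (ℓ - μ i') : ℕ) : ℤ)
            ≤ 1 + (NY y i (k - 1) : ℤ) + ((min (k - 1) ℓ - (ℓ - μ i) : ℕ) : ℤ)) := by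
    intro i i' k hk
    rw [Finset.sum_sub_distrib]
    have hs := shiftSum (fun j => ((x.box i j).card : ℤ)) (by simp [hbox0]) k hk
    rw [hs, hSB i' k, hSB i (k - 1)]
    omega
  constructor
  · intro hmax
    have hadj : ∀ (i i' : Fin n), (i : ℕ) + 1 = (i' : ℕ) → ∀ p,
        y.entry i p ≠ 0 → y.entry i' p ≠ 0 → y.entry i p < y.entry i' p := by
      intro i i' hii p hpi hpi'
      obtain ⟨hμp, hplam⟩ := (y.supp i p).mp hpi
      obtain ⟨hμp', hplam'⟩ := (y.supp i' p).mp hpi'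
      have hk1 : 1 ≤ y.entry i' p := by omega
      have hkℓ : y.entry i' p ≤ ℓ := y.le_alpha i' p
      have hkμ : ℓ - y.entry i' p < μ i' := by
        have hres := y.restrict i' p hpi'
        simp only [colHt] at hres
        rw [auxFin μ hμ] at hres
        exact hres
      have hM := (hMre i i' (y.entry i' p) hk1).mp (hmax i i' hii (y.entry i' p))
      have hμi := hml i
      have hμi' := hml i'
      have hμle : μ i' ≤ μ i := hμ i i' (by rw [Fin.le_def]; omega)
      have hS : μ i' + NY y i' (y.entry i' p) ≤ μ i + NY y i (y.entry i' p - 1) := by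
        omega
      have h1 : p < μ i' + NY y i' (y.entry i' p) :=
        (rowN y i' (y.entry i' p) p hμp' hplam').mp le_rfl
      have h2 : p < μ i + NY y i (y.entry i' p - 1) := by omega
      have h3 := (rowN y i (y.entry i' p - 1) p hμp hplam).mpr h2
      omega
    have key : ∀ d : ℕ, ∀ (i i' : Fin n) (p : ℕ), (i : ℕ) + d + 1 = (i' : ℕ) →
        y.entry i p ≠ 0 → y.entry i' p ≠ 0 → y.entry i p < y.entry i' p := by
      intro d
      induction d with
      | zero =>
        intro i i' p h h1 h2
        exact hadj i i' (by omega) p h1 h2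
      | succ m ih =>
        intro i i' p h h1 h2
        have hlt : (i : ℕ) + m + 1 < n := by
          have := i'.isLt
          omega
        set im : Fin n := ⟨(i : ℕ) + m + 1, hlt⟩ with him
        have hmid : y.entry im p ≠ 0 := by
          rw [y.supp]
          obtain ⟨ha, hb⟩ := (y.supp i p).mp h1
          obtain ⟨hc, hd⟩ := (y.supp i' p).mp h2
          constructor
          · exact le_trans (hμ i im (by rw [Fin.le_def]; simp [him]; omega)) ha
          · exact lt_of_lt_of_le hd (hlam im i' (by rw [Fin.le_def]; simp [him]; omega))
        have t1 := ih i im p (by simp [him]) h1 hmid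
        have t2 := hadj im i' (by simp [him]; omega) p hmid h2
        omega
    intro i i' p hlt h1 h2
    have hd : (i : ℕ) + ((i' : ℕ) - (i : ℕ) - 1) + 1 = (i' : ℕ) := by
      have := Fin.lt_def.mp hlt
      omega
    exact key _ i i' p hd h1 h2
  · intro hstrict i i' hii k
    rcases Nat.eq_zero_or_pos k with hk0 | hk1
    · subst hk0
      rw [Finset.Icc_eq_empty (by omega)]
      simp
    rw [hMre i i' k hk1]
    have hμi := hml i
    have hμi' := hml i'
    have hμle : μ i' ≤ μ i := hμ i i' (by rw [Fin.le_def]; omega)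
    by_cases hcase : k ≤ ℓ - μ i'
    · have hN0 : NY y i' k = 0 := by
        unfold NY
        apply Finset.sum_eq_zero
        intro v hv
        simp only [Finset.mem_Icc] at hv
        exact cntY_zero y hμ i' v hv.1 (by omega)
      omega
    · push_neg at hcase
      have hS : μ i' + NY y i' k ≤ μ i + NY y i (k - 1) := by
        rcases Nat.eq_zero_or_pos (NY y i' k) with h0 | hpos
        · omega
        · have hplam' : μ i' + NY y i' k - 1 < lam i' := by
            have := NYbound y i' k hpos
            omega
          have hpμ' : μ i' ≤ μ i' + NY y i' k - 1 := by omega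
          have he' : y.entry i' (μ i' + NY y i' k - 1) ≤ k :=
            (rowN y i' k _ hpμ' hplam').mpr (by omega)
          have hpne' : y.entry i' (μ i' + NY y i' k - 1) ≠ 0 :=
            (y.supp i' _).mpr ⟨hpμ', hplam'⟩
          by_cases hpm : μ i' + NY y i' k - 1 < μ i
          · omega
          · push_neg at hpm
            have hplam : μ i' + NY y i' k - 1 < lam i :=
              lt_of_lt_of_le hplam' (hlam i i' (by rw [Fin.le_def]; omega))
            have hpne : y.entry i (μ i' + NY y i' k - 1) ≠ 0 :=
              (y.supp i _).mpr ⟨hpm, hplam⟩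
            have hlt := hstrict i i' (μ i' + NY y i' k - 1)
              (by rw [Fin.lt_def]; omega) hpne hpne'
            have hle1 : y.entry i (μ i' + NY y i' k - 1) ≤ k - 1 := by omega
            have := (rowN y i (k - 1) _ hpm hplam).mp hle1
            omega
      omega
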